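/- Let 0 < t₁ < t₂ < s < 1 satisfy ((1-s)/s)·(t₂/(1-t₂)) > ((1-t₂)/t₂)·(t₁/(1-t₁)). Let u₁ ∈ (0,1) and let u₂ satisfy u₁^{((1-s)/s)(t₂/(1-t₂))} < u₂ < u₁^{((1-t₂)/t₂)(t₁/(1-t₁))}. Set v₁ = u₂^{(1-t₁)/t₁} and v₂ = u₁^{(1-s)/s}. Then u₁ < u₂, v₁ < v₂, h(u₂,v₁) = t₁, h(u₁,v₂) = s, and t₁ < min{h(u₁,v₁), h(u₂,v₂)} ≤ max{h(u₁,v₁), h(u₂,v₂)} ≤ t₂ < s. -/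

import Mathlib

set_option maxHeartbeats 1000000


noncomputable def hFun (u v : ℝ) : ℝ := Real.log u / Real.log (u * v)

theorem linear_not_TP2_inequality (t₁ t₂ s u₁ u₂ v₁ v₂ : ℝ)
    (ht1 : 0 < t₁) (ht12 : t₁ < t₂) (ht2s : t₂ < s) (hs : s < 1)
    (hcond : (1 - t₂) / t₂ * (t₁ / (1 - t₁)) < (1 - s) / s * (t₂ / (1 - t₂)))
    (hu1 : u₁ ∈ Set.Ioo (0:ℝ) 1)
    (hu2l : u₁ ^ ((1 - s) / s * (t₂ / (1 - t₂))) < u₂)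
    (hu2r : u₂ < u₁ ^ ((1 - t₂) / t₂ * (t₁ / (1 - t₁))))
    (hv₁ : v₁ = u₂ ^ ((1 - t₁) / t₁))
    (hv₂ : v₂ = u₁ ^ ((1 - s) / s)) :
    u₁ < u₂ ∧ v₁ < v₂ ∧ hFun u₂ v₁ = t₁ ∧ hFun u₁ v₂ = s ∧
    t₁ < min (hFun u₁ v₁) (hFun u₂ v₂) ∧
    max (hFun u₁ v₁) (hFun u₂ v₂) ≤ t₂ ∧ t₂ < s := by
  obtain ⟨hu1p, hu1lt⟩ := hu1
  have ht1' : 0 < 1 - t₁ := by linarith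
  have ht2 : 0 < t₂ := by linarith
  have ht2' : 0 < 1 - t₂ := by linarith
  have hsp : 0 < s := by linarith
  have hs' : 0 < 1 - s := by linarith
  set a := Real.log u₁ with ha_def
  set b := Real.log u₂ with hb_def
  have ha : a < 0 := Real.log_neg hu1p hu1lt
  have hu2p : 0 < u₂ := lt_trans (Real.rpow_pos_of_pos hu1p _) hu2l
  have hbE2 : b < (1 - t₂) / t₂ * (t₁ / (1 - t₁)) * a := by
    have h := Real.log_lt_log hu2p hu2r
    rwa [Real.log_rpow hu1p] at h
  have haE1 : (1 - s) / s * (t₂ / (1 - t₂)) * a < b := by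
    have h := Real.log_lt_log (Real.rpow_pos_of_pos hu1p _) hu2l
    rwa [Real.log_rpow hu1p] at h
  -- division-free forms
  have hbE2' : b * (t₂ * (1 - t₁)) < (1 - t₂) * t₁ * a := by
    rw [div_mul_div_comm, div_mul_eq_mul_div, lt_div_iff₀ (by positivity)] at hbE2
    linarith
  have haE1' : (1 - s) * t₂ * a < b * (s * (1 - t₂)) := by
    rw [div_mul_div_comm, div_mul_eq_mul_div, div_lt_iff₀ (by positivity)] at haE1
    linarith
  have hb : b < 0 := by
    nlinarith [mul_pos ht2 ht1', mul_neg_of_pos_of_neg (mul_pos ht2' ht1) ha]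
  have hab : a < b := by
    have hE1lt1 : (1 - s) / s * (t₂ / (1 - t₂)) < 1 := by
      rw [div_mul_div_comm, div_lt_one (by positivity)]
      nlinarith
    have := mul_lt_mul_of_neg_right hE1lt1 ha
    linarith
  have hu12 : u₁ < u₂ := (Real.log_lt_log_iff hu1p hu2p).mp hab
  have hv1p : 0 < v₁ := hv₁ ▸ Real.rpow_pos_of_pos hu2p _
  have hv2p : 0 < v₂ := hv₂ ▸ Real.rpow_pos_of_pos hu1p _
  have hlv1 : Real.log v₁ = (1 - t₁) / t₁ * b := by rw [hv₁, Real.log_rpow hu2p]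
  have hlv2 : Real.log v₂ = (1 - s) / s * a := by rw [hv₂, Real.log_rpow hu1p]
  -- key inequality s(1-t₁)b < t₁(1-s)a
  have hkey : s * (1 - t₁) * b < t₁ * (1 - s) * a := by
    have h1 := mul_lt_mul_of_pos_left hbE2' hsp
    have h2 : (s * (1 - t₂) - t₂ * (1 - s)) * (t₁ * a) ≤ 0 :=
      mul_nonpos_of_nonneg_of_nonpos (by nlinarith)
        (mul_nonpos_of_nonneg_of_nonpos ht1.le ha.le)
    have h3 : t₂ * (s * (1 - t₁) * b) < t₂ * (t₁ * (1 - s) * a) := by nlinarith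
    exact (mul_lt_mul_iff_right₀ ht2).mp h3
  have hv12 : v₁ < v₂ := by
    rw [← Real.log_lt_log_iff hv1p hv2p, hlv1, hlv2, div_mul_eq_mul_div,
      div_mul_eq_mul_div, div_lt_div_iff₀ ht1 hsp]
    linarith [hkey]
  have hH21 : hFun u₂ v₁ = t₁ := by
    unfold hFun
    rw [Real.log_mul hu2p.ne' hv1p.ne', hlv1, ← hb_def,
      show b + (1 - t₁) / t₁ * b = b / t₁ by field_simp; ring]
    rw [div_div_eq_mul_div, mul_comm, mul_div_assoc, div_self hb.ne, mul_one]
  have hH12 : hFun u₁ v₂ = s := by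
    unfold hFun
    rw [Real.log_mul hu1p.ne' hv2p.ne', hlv2, ← ha_def,
      show a + (1 - s) / s * a = a / s by field_simp; ring]
    rw [div_div_eq_mul_div, mul_comm, mul_div_assoc, div_self ha.ne, mul_one]
  have hB : t₁ * a + (1 - t₁) * b < 0 := by nlinarith
  have hC : s * b + (1 - s) * a < 0 := by nlinarith
  have hA : a + (1 - t₁) / t₁ * b < 0 := by
    have : (1 - t₁) / t₁ * b < 0 := mul_neg_of_pos_of_neg (by positivity) hb
    linarith
  have hD : b + (1 - s) / s * a < 0 := by
    have : (1 - s) / s * a < 0 := mul_neg_of_pos_of_neg (by positivity) ha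
    linarith
  have h11 : hFun u₁ v₁ = (t₁ * a) / (t₁ * a + (1 - t₁) * b) := by
    unfold hFun
    rw [Real.log_mul hu1p.ne' hv1p.ne', hlv1, ← ha_def,
      show a + (1 - t₁) / t₁ * b = (t₁ * a + (1 - t₁) * b) / t₁ by field_simp [ht1.ne'],
      div_div_eq_mul_div, mul_comm a t₁]
  have h22 : hFun u₂ v₂ = (s * b) / (s * b + (1 - s) * a) := by
    unfold hFun
    rw [Real.log_mul hu2p.ne' hv2p.ne', hlv2, ← hb_def,
      show b + (1 - s) / s * a = (s * b + (1 - s) * a) / s by field_simp [hsp.ne'],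
      div_div_eq_mul_div, mul_comm b s]
  refine ⟨hu12, hv12, hH21, hH12, ?_, ?_, ht2s⟩
  · refine lt_min ?_ ?_
    · rw [h11, lt_div_iff_of_neg hB]
      nlinarith [mul_pos (mul_pos ht1 ht1') (sub_pos.2 hab)]
    · rw [h22, lt_div_iff_of_neg hC]
      nlinarith [hkey]
  · refine max_le ?_ ?_
    · rw [h11, div_le_iff_of_neg hB]
      nlinarith [hbE2']
    · rw [h22, div_le_iff_of_neg hC]
      nlinarith [haE1']
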